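/- arXiv:2212.01463 — 2 statements merged into one kernel-verified Lean document; each statement's English description precedes it below -/
import Mathlib

section
/- Consider the DEJMPS purification circuit applied to two copies of a Bell-diagonal state ρ with coefficients (F1, F2, F3, F4). The probability that the measurement outcomes on qubits 3 and 4 coincide (i.e., the success probability of the protocol) equals (F1 + F2)² + (F3 + F4)². -/
open Matrix

/-- Index type for the state space of two qubits. -/
abbrev Q2 := Fin 2 × Fin 2

/-- Index type for the state space of four qubits (ordered as qubits 1, 2, 3, 4). -/
abbrev Q4 := Fin 2 × Fin 2 × Fin 2 × Fin 2

/-- The rank-one projector `|v⟩⟨v|` onto a vector `v`. -/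
def dyad {n : Type*} (v : n → ℂ) : Matrix n n ℂ :=
  fun i j => v i * (starRingEnd ℂ) (v j)

/-- The Bell state `φ+ = (|00⟩ + |11⟩)/√2`. -/
noncomputable def phiP : Q2 → ℂ :=
  fun a => ((if a = (0, 0) then 1 else 0) + (if a = (1, 1) then 1 else 0)) / (Real.sqrt 2 : ℂ)

/-- The Bell state `φ- = (|00⟩ - |11⟩)/√2`. -/
noncomputable def phiM : Q2 → ℂ :=
  fun a => ((if a = (0, 0) then 1 else 0) - (if a = (1, 1) then 1 else 0)) / (Real.sqrt 2 : ℂ)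

/-- The Bell state `ψ+ = (|01⟩ + |10⟩)/√2`. -/
noncomputable def psiP : Q2 → ℂ :=
  fun a => ((if a = (0, 1) then 1 else 0) + (if a = (1, 0) then 1 else 0)) / (Real.sqrt 2 : ℂ)

/-- The Bell state `ψ- = (|01⟩ - |10⟩)/√2`. -/
noncomputable def psiM : Q2 → ℂ :=
  fun a => ((if a = (0, 1) then 1 else 0) - (if a = (1, 0) then 1 else 0)) / (Real.sqrt 2 : ℂ)

/-- The Bell-diagonal two-qubit state with coefficients `(F1, F2, F3, F4)`:
`ρ = F1 |φ+⟩⟨φ+| + F2 |ψ-⟩⟨ψ-| + F3 |ψ+⟩⟨ψ+| + F4 |φ-⟩⟨φ-|`; its fidelity is `F1`. -/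
noncomputable def bellDiag (F1 F2 F3 F4 : ℝ) : Matrix Q2 Q2 ℂ :=
  (F1 : ℂ) • dyad phiP + (F2 : ℂ) • dyad psiM + (F3 : ℂ) • dyad psiP + (F4 : ℂ) • dyad phiM

/-- The four-qubit state in which qubit pair (1,2) and qubit pair (3,4) are each in the
two-qubit state `ρ`. -/
def pairState (ρ : Matrix Q2 Q2 ℂ) : Matrix Q4 Q4 ℂ :=
  fun a b => ρ (a.1, a.2.1) (b.1, b.2.1) * ρ (a.2.2.1, a.2.2.2) (b.2.2.1, b.2.2.2)

/-- The single-qubit rotation `Rx(π/2) = (1/√2) [[1, -i], [-i, 1]]`. -/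
noncomputable def rxP : Matrix (Fin 2) (Fin 2) ℂ :=
  ((Real.sqrt 2 : ℂ))⁻¹ • !![1, -Complex.I; -Complex.I, 1]

/-- The single-qubit rotation `Rx(-π/2) = (1/√2) [[1, i], [i, 1]]`. -/
noncomputable def rxM : Matrix (Fin 2) (Fin 2) ℂ :=
  ((Real.sqrt 2 : ℂ))⁻¹ • !![1, Complex.I; Complex.I, 1]

/-- The local rotations of the DEJMPS circuit: party A applies `Rx(π/2)` to qubits 1 and 3,
party B applies `Rx(-π/2)` to qubits 2 and 4. -/
noncomputable def dejmpsLocal : Matrix Q4 Q4 ℂ :=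
  fun a b => rxP a.1 b.1 * rxM a.2.1 b.2.1 * rxP a.2.2.1 b.2.2.1 * rxM a.2.2.2 b.2.2.2

/-- CNOT with control qubit 1 and target qubit 3. -/
def cnot13 : Matrix Q4 Q4 ℂ :=
  fun a b =>
    if a.1 = b.1 ∧ a.2.1 = b.2.1 ∧ a.2.2.1 = b.2.2.1 + b.1 ∧ a.2.2.2 = b.2.2.2 then 1 else 0

/-- CNOT with control qubit 2 and target qubit 4. -/
def cnot24 : Matrix Q4 Q4 ℂ :=
  fun a b =>
    if a.1 = b.1 ∧ a.2.1 = b.2.1 ∧ a.2.2.1 = b.2.2.1 ∧ a.2.2.2 = b.2.2.2 + b.2.1 then 1 else 0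

/-- The projector onto coinciding computational-basis measurement outcomes
on qubits 3 and 4. -/
def projEq34 : Matrix Q4 Q4 ℂ :=
  fun a b => if a = b ∧ a.2.2.1 = a.2.2.2 then 1 else 0

/-- The four-qubit state just before measurement in the DEJMPS circuit applied to two copies
of the two-qubit state `ρ` (pairs (1,2) and (3,4)): the local rotations are applied, followed
by the two CNOTs. -/
noncomputable def dejmpsFinal (ρ : Matrix Q2 Q2 ℂ) : Matrix Q4 Q4 ℂ :=
  (cnot24 * cnot13 * dejmpsLocal) * pairState ρ * (cnot24 * cnot13 * dejmpsLocal)ᴴ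

section Aux

lemma aux_hs0 : (Real.sqrt 2 : ℂ) ≠ 0 := by
  simp [Complex.ofReal_ne_zero, Real.sqrt_eq_zero']

lemma aux_hs2 : (Real.sqrt 2 : ℂ) ^ 2 = 2 := by
  rw [← Complex.ofReal_pow, Real.sq_sqrt (by norm_num : (0:ℝ) ≤ 2)]
  norm_num

noncomputable def mloc : Matrix Q2 Q2 ℂ := fun a b => rxP a.1 b.1 * rxM a.2 b.2

def tens (P Q : Matrix Q2 Q2 ℂ) : Matrix Q4 Q4 ℂ :=
  fun a b => P (a.1, a.2.1) (b.1, b.2.1) * Q (a.2.2.1, a.2.2.2) (b.2.2.1, b.2.2.2)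

lemma aux_dejmpsLocal_eq : dejmpsLocal = tens mloc mloc := by
  funext a b; simp only [dejmpsLocal, tens, mloc]; ring

lemma aux_pairState_eq (ρ : Matrix Q2 Q2 ℂ) : pairState ρ = tens ρ ρ := rfl

lemma aux_tens_mul (P Q R S : Matrix Q2 Q2 ℂ) :
    tens P Q * tens R S = tens (P * R) (Q * S) := by
  funext a b
  simp only [tens, Matrix.mul_apply, Fintype.sum_prod_type, Fin.sum_univ_two]
  ring

lemma aux_tens_conjT (P Q : Matrix Q2 Q2 ℂ) : (tens P Q)ᴴ = tens Pᴴ Qᴴ := by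
  funext a b
  simp only [tens, Matrix.conjTranspose_apply, star_mul']

lemma aux_conj_dyad (M : Matrix Q2 Q2 ℂ) (v : Q2 → ℂ) :
    M * dyad v * Mᴴ = dyad (M.mulVec v) := by
  funext a b
  simp only [dyad, Matrix.mul_apply, Matrix.conjTranspose_apply, Matrix.mulVec,
    dotProduct, Fintype.sum_prod_type, Fin.sum_univ_two, starRingEnd_apply,
    star_add, star_mul']
  ring

lemma aux_hs3 : (Real.sqrt 2 : ℂ) ^ 3 = 2 * Real.sqrt 2 := by
  rw [pow_succ, aux_hs2, mul_comm]

lemma aux_hs4 : (Real.sqrt 2 : ℂ) ^ 4 = 4 := by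
  rw [pow_succ, aux_hs3]; rw [show (4:ℂ) = 2 * 2 by norm_num, ← aux_hs2]; ring

lemma aux_hs5 : (Real.sqrt 2 : ℂ) ^ 5 = 4 * Real.sqrt 2 := by
  rw [pow_succ, aux_hs4]

lemma aux_hs6 : (Real.sqrt 2 : ℂ) ^ 6 = 8 := by
  rw [pow_succ, aux_hs5, mul_assoc, ← pow_two, aux_hs2]; norm_num

lemma aux_dyad_I_smul (v : Q2 → ℂ) : dyad (Complex.I • v) = dyad v := by
  funext i j
  simp only [dyad, Pi.smul_apply, smul_eq_mul, _root_.map_mul, Complex.conj_I]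
  linear_combination (-(v i * (starRingEnd ℂ) (v j))) * Complex.I_sq

lemma aux_mv_phiP : mloc.mulVec phiP = phiP := by
  funext a
  obtain ⟨a1, a2⟩ := a
  have h0 := aux_hs0
  have h2 := aux_hs2
  fin_cases a1 <;> fin_cases a2 <;>
    simp [Matrix.mulVec, dotProduct, Fintype.sum_prod_type, Fin.sum_univ_two, mloc,
      rxP, rxM, phiP, Prod.ext_iff] <;>
    field_simp <;> ring_nf <;>
    (try simp only [aux_hs2, aux_hs3, aux_hs4, aux_hs5, aux_hs6, Complex.I_sq]) <;> (try ring)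

lemma aux_mv_psiP : mloc.mulVec psiP = psiP := by
  funext a
  obtain ⟨a1, a2⟩ := a
  have h0 := aux_hs0
  have h2 := aux_hs2
  fin_cases a1 <;> fin_cases a2 <;>
    simp [Matrix.mulVec, dotProduct, Fintype.sum_prod_type, Fin.sum_univ_two, mloc,
      rxP, rxM, psiP, Prod.ext_iff] <;>
    field_simp <;> ring_nf <;>
    (try simp only [aux_hs2, aux_hs3, aux_hs4, aux_hs5, aux_hs6, Complex.I_sq]) <;> (try ring)

lemma aux_mv_phiM : mloc.mulVec phiM = Complex.I • psiM := by
  funext a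
  obtain ⟨a1, a2⟩ := a
  have h0 := aux_hs0
  have h2 := aux_hs2
  fin_cases a1 <;> fin_cases a2 <;>
    simp [Matrix.mulVec, dotProduct, Fintype.sum_prod_type, Fin.sum_univ_two, mloc,
      rxP, rxM, phiM, psiM, Prod.ext_iff] <;>
    field_simp <;> ring_nf <;>
    (try simp only [aux_hs2, aux_hs3, aux_hs4, aux_hs5, aux_hs6, Complex.I_sq]) <;> (try ring)

lemma aux_mv_psiM : mloc.mulVec psiM = Complex.I • phiM := by
  funext a
  obtain ⟨a1, a2⟩ := a
  have h0 := aux_hs0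
  have h2 := aux_hs2
  fin_cases a1 <;> fin_cases a2 <;>
    simp [Matrix.mulVec, dotProduct, Fintype.sum_prod_type, Fin.sum_univ_two, mloc,
      rxP, rxM, phiM, psiM, Prod.ext_iff] <;>
    field_simp <;> ring_nf <;>
    (try simp only [aux_hs2, aux_hs3, aux_hs4, aux_hs5, aux_hs6, Complex.I_sq]) <;> (try ring)

lemma aux_sigma (F1 F2 F3 F4 : ℝ) :
    mloc * bellDiag F1 F2 F3 F4 * mlocᴴ = bellDiag F1 F4 F3 F2 := by
  simp only [bellDiag, Matrix.mul_add, Matrix.add_mul, Matrix.mul_smul, Matrix.smul_mul]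
  simp only [aux_conj_dyad, aux_mv_phiP, aux_mv_psiP, aux_mv_phiM, aux_mv_psiM,
    aux_dyad_I_smul]
  abel

lemma aux_cnot13_mul (M : Matrix Q4 Q4 ℂ) (a b : Q4) :
    (cnot13 * M) a b = M (a.1, a.2.1, a.2.2.1 + a.1, a.2.2.2) b := by
  obtain ⟨a1, a2, a3, a4⟩ := a
  fin_cases a1 <;> fin_cases a2 <;> fin_cases a3 <;> fin_cases a4 <;>
    simp [cnot13, Matrix.mul_apply, Fintype.sum_prod_type, Fin.sum_univ_two, Prod.ext_iff]

lemma aux_cnot24_mul (M : Matrix Q4 Q4 ℂ) (a b : Q4) :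
    (cnot24 * M) a b = M (a.1, a.2.1, a.2.2.1, a.2.2.2 + a.2.1) b := by
  obtain ⟨a1, a2, a3, a4⟩ := a
  fin_cases a1 <;> fin_cases a2 <;> fin_cases a3 <;> fin_cases a4 <;>
    simp [cnot24, Matrix.mul_apply, Fintype.sum_prod_type, Fin.sum_univ_two, Prod.ext_iff]

lemma aux_mul_cnot13T (M : Matrix Q4 Q4 ℂ) (a b : Q4) :
    (M * cnot13ᴴ) a b = M a (b.1, b.2.1, b.2.2.1 + b.1, b.2.2.2) := by
  obtain ⟨b1, b2, b3, b4⟩ := b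
  fin_cases b1 <;> fin_cases b2 <;> fin_cases b3 <;> fin_cases b4 <;>
    simp [cnot13, Matrix.mul_apply, Matrix.conjTranspose_apply, Fintype.sum_prod_type,
      Fin.sum_univ_two, Prod.ext_iff]

lemma aux_mul_cnot24T (M : Matrix Q4 Q4 ℂ) (a b : Q4) :
    (M * cnot24ᴴ) a b = M a (b.1, b.2.1, b.2.2.1, b.2.2.2 + b.2.1) := by
  obtain ⟨b1, b2, b3, b4⟩ := b
  fin_cases b1 <;> fin_cases b2 <;> fin_cases b3 <;> fin_cases b4 <;>
    simp [cnot24, Matrix.mul_apply, Matrix.conjTranspose_apply, Fintype.sum_prod_type,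
      Fin.sum_univ_two, Prod.ext_iff]

lemma aux_projEq34_diag :
    projEq34 = Matrix.diagonal (fun a : Q4 => if a.2.2.1 = a.2.2.2 then (1:ℂ) else 0) := by
  funext a b
  simp only [projEq34, Matrix.diagonal]
  by_cases h : a = b <;> by_cases h' : a.2.2.1 = a.2.2.2 <;> simp [h, h', Matrix.of_apply]

lemma aux_trace_proj (X : Matrix Q4 Q4 ℂ) :
    Matrix.trace (projEq34 * X * projEq34)
      = ∑ a : Q4, if a.2.2.1 = a.2.2.2 then X a a else 0 := by
  rw [aux_projEq34_diag]
  simp only [Matrix.trace, Matrix.diag, Matrix.mul_diagonal, Matrix.diagonal_mul]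
  refine Finset.sum_congr rfl fun a _ => ?_
  split <;> simp

lemma aux_bd_diag (G1 G2 G3 G4 : ℝ) (x y : Fin 2) :
    bellDiag G1 G2 G3 G4 (x, y) (x, y)
      = if x = y then ((G1 : ℂ) + G4) / 2 else ((G2 : ℂ) + G3) / 2 := by
  have h0 := aux_hs0
  fin_cases x <;> fin_cases y <;>
    simp [bellDiag, dyad, phiP, phiM, psiP, psiM, Matrix.add_apply, Matrix.smul_apply,
      smul_eq_mul, map_div₀, map_add, map_sub, _root_.map_one, map_zero, Complex.conj_ofReal,
      Prod.ext_iff] <;>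
    field_simp <;> (try ring_nf) <;>
    (try simp only [aux_hs2, aux_hs3, aux_hs4, aux_hs5, aux_hs6]) <;> (try ring) <;> tauto

end Aux

/-- Success probability of the DEJMPS protocol on two copies of a Bell-diagonal state with
coefficients `(F1, F2, F3, F4)`: the probability that the computational-basis measurement
outcomes on qubits 3 and 4 coincide equals `(F1 + F2)² + (F3 + F4)²`. -/
theorem dejmps_success_probability (F1 F2 F3 F4 : ℝ)
    (h1 : 0 ≤ F1) (h2 : 0 ≤ F2) (h3 : 0 ≤ F3) (h4 : 0 ≤ F4)
    (hsum : F1 + F2 + F3 + F4 = 1) :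
    Matrix.trace (projEq34 * dejmpsFinal (bellDiag F1 F2 F3 F4) * projEq34)
      = (((F1 + F2) ^ 2 + (F3 + F4) ^ 2 : ℝ) : ℂ) := by

  have hK : dejmpsLocal * pairState (bellDiag F1 F2 F3 F4) * dejmpsLocalᴴ
      = tens (bellDiag F1 F4 F3 F2) (bellDiag F1 F4 F3 F2) := by
    rw [aux_dejmpsLocal_eq, aux_pairState_eq, aux_tens_conjT, aux_tens_mul, aux_tens_mul,
      aux_sigma]
  have hfin : dejmpsFinal (bellDiag F1 F2 F3 F4)
      = cnot24 * (cnot13 * ((tens (bellDiag F1 F4 F3 F2) (bellDiag F1 F4 F3 F2)) * cnot13ᴴ))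
        * cnot24ᴴ := by
    rw [← hK]
    simp only [dejmpsFinal, Matrix.conjTranspose_mul, Matrix.mul_assoc]
  rw [hfin, aux_trace_proj]
  simp only [aux_mul_cnot24T, aux_cnot24_mul, aux_cnot13_mul, aux_mul_cnot13T, tens]
  simp only [Fintype.sum_prod_type, Fin.sum_univ_two]
  have e00 : (0 : Fin 2) + 0 = 0 := rfl
  have e01 : (0 : Fin 2) + 1 = 1 := rfl
  have e10 : (1 : Fin 2) + 0 = 1 := rfl
  have e11 : (1 : Fin 2) + 1 = 0 := rfl
  simp only [e00, e01, e10, e11, aux_bd_diag]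
  norm_num
  push_cast
  ring
end

section
/- Define h(F) = F² / (F² + (1 − F)²) and let h^{∘L} denote its L-fold iterate. Then for every F with 1/2 < F < 1 and every threshold F^{th} < 1, there exists an integer L ≥ 0 such that h^{∘L}(F) ≥ F^{th}; that is, iterated DEJMPS purification of binary states drives the fidelity arbitrarily close to 1. -/
/-- The DEJMPS output fidelity map for binary input states:
`h(F) = F² / (F² + (1 - F)²)`. -/
noncomputable def dejmpsBinaryFid (F : ℝ) : ℝ := F ^ 2 / (F ^ 2 + (1 - F) ^ 2)

/-- Iterated DEJMPS purification of binary states drives the fidelity arbitrarily close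
to `1`: for every `1/2 < F < 1` and every threshold `Fth < 1`, finitely many rounds `L`
suffice to reach `h^[L] F ≥ Fth`. -/
theorem dejmpsBinaryFid_iterate_reaches_threshold
    (F : ℝ) (h1 : 1 / 2 < F) (h2 : F < 1) (Fth : ℝ) (hFth : Fth < 1) :
    ∃ L : ℕ, Fth ≤ dejmpsBinaryFid^[L] F := by
  have hd : 0 < F ^ 2 + (1 - F) ^ 2 := by nlinarith
  set c : ℝ := (1 - F) / (F ^ 2 + (1 - F) ^ 2) with hc
  have hc0 : 0 ≤ c := div_nonneg (by linarith) hd.le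
  have hc1 : c < 1 := by
    rw [hc, div_lt_one hd]; nlinarith
  have key : ∀ n, F ≤ dejmpsBinaryFid^[n] F ∧ dejmpsBinaryFid^[n] F < 1 ∧
      1 - dejmpsBinaryFid^[n] F ≤ c ^ n * (1 - F) := by
    intro n
    induction n with
    | zero => simpa using by linarith
    | succ n ih =>
      obtain ⟨hA, hB, hC⟩ := ih
      set x := dejmpsBinaryFid^[n] F with hx
      have hdx : 0 < x ^ 2 + (1 - x) ^ 2 := by nlinarith
      rw [Function.iterate_succ_apply']
      have hval : dejmpsBinaryFid x = x ^ 2 / (x ^ 2 + (1 - x) ^ 2) := rfl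
      have h1x : 1 - dejmpsBinaryFid x = (1 - x) ^ 2 / (x ^ 2 + (1 - x) ^ 2) := by
        rw [hval]; field_simp; ring
      have hlt1 : dejmpsBinaryFid x < 1 := by
        rw [hval, div_lt_one hdx]
        nlinarith [sq_nonneg (1 - x)]
      have hkey : (1 - x) * (F ^ 2 + (1 - F) ^ 2) ≤ (1 - F) * (x ^ 2 + (1 - x) ^ 2) := by
        nlinarith [mul_nonneg (sub_nonneg.2 hA)
          (by nlinarith : (0:ℝ) ≤ 1 - 2 * (1 - x) * (1 - F))]
      have hstep : 1 - dejmpsBinaryFid x ≤ c * (1 - x) := by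
        rw [h1x, hc, div_mul_eq_mul_div, div_le_div_iff₀ hdx hd]
        nlinarith [mul_le_mul_of_nonneg_left hkey (by linarith : (0:ℝ) ≤ 1 - x)]
      have hchain : c * (1 - x) ≤ c ^ (n + 1) * (1 - F) := by
        rw [pow_succ]
        calc c * (1 - x) ≤ c * (c ^ n * (1 - F)) :=
              mul_le_mul_of_nonneg_left hC hc0
          _ = c ^ n * c * (1 - F) := by ring
      have h3 : c ^ (n + 1) * (1 - F) ≤ 1 - F := by
        have hp : c ^ (n + 1) ≤ 1 := pow_le_one₀ hc0 hc1.le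
        nlinarith
      exact ⟨by linarith, hlt1, by linarith⟩
  obtain ⟨L, hL⟩ := exists_pow_lt_of_lt_one
    (show (0:ℝ) < (1 - Fth) / (1 - F) from div_pos (by linarith) (by linarith)) hc1
  obtain ⟨hA, hB, hC⟩ := key L
  have : c ^ L * (1 - F) < 1 - Fth := by
    rw [← lt_div_iff₀ (by linarith : (0:ℝ) < 1 - F)]; exact hL
  exact ⟨L, by linarith⟩
end
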